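/- arXiv:2509.16575 — 3 statements merged into one kernel-verified Lean document; each statement's English description precedes it below -/
import Mathlib

section
/- Let $(X,\mu)$ be a measure space, $\gamma : X \to \mathbb{R}$ measurable with $\gamma(x) > 0$ for all $x$, and $s > 0$. Let $H$ be a complex Hilbert space, let $U : X \to B(H)$ assign to each $\xi \in X$ a bounded linear operator $U_\xi$ with $\|U_\xi \eta\| = \|\eta\|$ for all $\eta \in H$, and let $g : X \to \mathbb{C}$ be measurable with $\xi \mapsto (1+\gamma(\xi)^2)^{s/2} g(\xi)$ in $L^2(X,\mu)$ and $\xi \mapsto (1+\gamma(\xi)^2)^{-s/2}$ in $L^2(X,\mu)$. Suppose $T : H \to H$ is a bounded linear operator such that for every $\eta \in H$ the map $\xi \mapsto g(\xi)\, U_\xi \eta$ is Bochner integrable and $T\eta = \int_X g(\xi)\, U_\xi \eta \, d\mu(\xi)$. Then the operator norm of $T$ satisfies $\|T\|_{op} \leq \big\|(1+\gamma(\cdot)^2)^{-s/2}\big\|_{L^2(\mu)} \cdot \big\|(1+\gamma(\cdot)^2)^{s/2} g\big\|_{L^2(\mu)}$. -/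
open MeasureTheory

/-- If `T η = ∫ g(ξ) U_ξ η dμ(ξ)` with each `U_ξ` norm-preserving,
`(1+γ²)^{s/2} g ∈ L²` and `(1+γ²)^{-s/2} ∈ L²`, then
`‖T‖_op ≤ ‖(1+γ²)^{-s/2}‖_{L²} ⬝ ‖(1+γ²)^{s/2} g‖_{L²}`. -/
theorem quantum_sobolev_embeds_into_bounded_operators
    {X : Type*} [MeasurableSpace X] (μ : Measure X)
    (γ : X → ℝ) (hγ_meas : Measurable γ) (hγ_pos : ∀ x, 0 < γ x)
    (s : ℝ) (hs : 0 < s)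
    {H : Type*} [NormedAddCommGroup H] [InnerProductSpace ℂ H] [CompleteSpace H]
    (U : X → H →L[ℂ] H) (hU : ∀ ξ : X, ∀ η : H, ‖U ξ η‖ = ‖η‖)
    (g : X → ℂ) (hg_meas : Measurable g)
    (hg : MemLp (fun ξ => (((1 + γ ξ ^ 2) ^ (s / 2) : ℝ) : ℂ) * g ξ) 2 μ)
    (hw : MemLp (fun ξ => (1 + γ ξ ^ 2) ^ (-(s / 2))) 2 μ)
    (T : H →L[ℂ] H)
    (hT_int : ∀ η : H, Integrable (fun ξ => g ξ • U ξ η) μ)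
    (hT : ∀ η : H, T η = ∫ ξ, g ξ • U ξ η ∂μ) :
    ‖T‖ ≤ (∫ ξ, ((1 + γ ξ ^ 2) ^ (-(s / 2))) ^ 2 ∂μ) ^ (1/2 : ℝ) *
        (∫ ξ, ‖(((1 + γ ξ ^ 2) ^ (s / 2) : ℝ) : ℂ) * g ξ‖ ^ 2 ∂μ) ^ (1/2 : ℝ) := by
  have hbase : ∀ ξ, (0:ℝ) < 1 + γ ξ ^ 2 := fun ξ => by positivity
  set A : ℝ := (∫ ξ, ((1 + γ ξ ^ 2) ^ (-(s / 2))) ^ 2 ∂μ) ^ (1/2 : ℝ) with hA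
  set B : ℝ := (∫ ξ, ‖(((1 + γ ξ ^ 2) ^ (s / 2) : ℝ) : ℂ) * g ξ‖ ^ 2 ∂μ) ^ (1/2 : ℝ) with hB
  have hA0 : 0 ≤ A := Real.rpow_nonneg (integral_nonneg fun ξ => by positivity) _
  have hB0 : 0 ≤ B := Real.rpow_nonneg (integral_nonneg fun ξ => by positivity) _
  -- key Hölder estimate
  have hpq : Real.HolderConjugate 2 2 := Real.HolderConjugate.two_two
  have hkey : ∫ ξ, ‖g ξ‖ ∂μ ≤ A * B := by
    have heq : ∀ ξ, ‖g ξ‖ =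
        ((1 + γ ξ ^ 2) ^ (-(s / 2))) * ‖(((1 + γ ξ ^ 2) ^ (s / 2) : ℝ) : ℂ) * g ξ‖ := by
      intro ξ
      rw [norm_mul, Complex.norm_real, Real.norm_of_nonneg (Real.rpow_nonneg (hbase ξ).le _),
        ← mul_assoc, ← Real.rpow_add (hbase ξ)]
      simp
    calc ∫ ξ, ‖g ξ‖ ∂μ
        = ∫ ξ, ((1 + γ ξ ^ 2) ^ (-(s / 2))) *
            ‖(((1 + γ ξ ^ 2) ^ (s / 2) : ℝ) : ℂ) * g ξ‖ ∂μ := by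
          exact integral_congr_ae (Filter.Eventually.of_forall fun ξ => heq ξ)
      _ ≤ (∫ ξ, ((1 + γ ξ ^ 2) ^ (-(s / 2))) ^ (2:ℝ) ∂μ) ^ (1/2 : ℝ) *
            (∫ ξ, ‖(((1 + γ ξ ^ 2) ^ (s / 2) : ℝ) : ℂ) * g ξ‖ ^ (2:ℝ) ∂μ) ^ (1/2 : ℝ) := by
          refine integral_mul_le_Lp_mul_Lq_of_nonneg hpq
            (Filter.Eventually.of_forall fun ξ => Real.rpow_nonneg (hbase ξ).le _)
            (Filter.Eventually.of_forall fun ξ => norm_nonneg _) ?_ ?_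
          · simpa using hw
          · simpa using hg.norm
      _ = A * B := by
          rw [hA, hB]
          congr 1
          · congr 1
            refine integral_congr_ae (Filter.Eventually.of_forall fun ξ => ?_)
            simp [Real.rpow_two]
          · congr 1
            refine integral_congr_ae (Filter.Eventually.of_forall fun ξ => ?_)
            simp [Real.rpow_two]
  refine T.opNorm_le_bound (mul_nonneg hA0 hB0) fun η => ?_
  rw [hT η]
  calc ‖∫ ξ, g ξ • U ξ η ∂μ‖ ≤ ∫ ξ, ‖g ξ • U ξ η‖ ∂μ := norm_integral_le_integral_norm _
    _ = ∫ ξ, ‖g ξ‖ * ‖η‖ ∂μ := by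
        refine integral_congr_ae (Filter.Eventually.of_forall fun ξ => ?_)
        simp [norm_smul, hU]
    _ = (∫ ξ, ‖g ξ‖ ∂μ) * ‖η‖ := by rw [integral_mul_const]
    _ ≤ A * B * ‖η‖ := by gcongr
end

section
/- Let $(X,\mu)$ be a measure space, $\gamma : X \to \mathbb{R}$ measurable with $\gamma(x) > 0$ for all $x$, and let $\alpha > s > 0$ be real numbers. Set $p = \frac{2\alpha}{\alpha+s}$, so $1 < p < 2$. Let $f : X \to \mathbb{C}$ be measurable. If the function $\xi \mapsto \frac{1}{1+\gamma(\xi)^2}$ belongs to $L^\alpha(X,\mu)$ and $\xi \mapsto (1+\gamma(\xi)^2)^{s/2} f(\xi)$ belongs to $L^2(X,\mu)$, then $f \in L^p(X,\mu)$ and $\|f\|_{L^p(\mu)} \leq \big\|(1+\gamma(\cdot)^2)^{s/2} f\big\|_{L^2(\mu)} \cdot \big\|\tfrac{1}{1+\gamma(\cdot)^2}\big\|_{L^\alpha(\mu)}^{s/2}$. -/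
open MeasureTheory

/-- Hölder estimate: for `α > s > 0` and `p = 2α/(α+s)`, if
`1/(1+γ²) ∈ L^α` and `(1+γ²)^{s/2} f ∈ L²`, then `1 < p < 2`, `f ∈ L^p` and
`‖f‖_{L^p} ≤ ‖(1+γ²)^{s/2} f‖_{L²} ⬝ ‖1/(1+γ²)‖_{L^α}^{s/2}`. -/
theorem weighted_holder_Lp_estimate
    {X : Type*} [MeasurableSpace X] (μ : Measure X)
    (γ : X → ℝ) (hγ_meas : Measurable γ) (hγ_pos : ∀ x, 0 < γ x)
    (s α : ℝ) (hs : 0 < s) (hα : s < α)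
    (p : ℝ) (hp : p = 2 * α / (α + s))
    (f : X → ℂ) (hf_meas : Measurable f)
    (hw : MemLp (fun ξ => 1 / (1 + γ ξ ^ 2)) (ENNReal.ofReal α) μ)
    (hf : MemLp (fun ξ => (((1 + γ ξ ^ 2) ^ (s / 2) : ℝ) : ℂ) * f ξ) 2 μ) :
    1 < p ∧ p < 2 ∧
    MemLp f (ENNReal.ofReal p) μ ∧
    (∫ ξ, ‖f ξ‖ ^ p ∂μ) ^ (1 / p) ≤
      (∫ ξ, (1 + γ ξ ^ 2) ^ s * ‖f ξ‖ ^ 2 ∂μ) ^ (1/2 : ℝ) *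
        ((∫ ξ, (1 / (1 + γ ξ ^ 2)) ^ α ∂μ) ^ (1 / α)) ^ (s / 2) := by
  have hα0 : (0:ℝ) < α := hs.trans hα
  have hαs : (0:ℝ) < α + s := by linarith
  have hp_pos : 0 < p := by rw [hp]; positivity
  have hp1 : 1 < p := by rw [hp, lt_div_iff₀ hαs]; linarith
  have hp2 : p < 2 := by rw [hp, div_lt_iff₀ hαs]; linarith
  have hA : ∀ ξ, (0:ℝ) < 1 + γ ξ ^ 2 := fun ξ => by positivity
  set w : X → ℝ := fun ξ => 1 / (1 + γ ξ ^ 2) with hw_def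
  set g : X → ℂ := fun ξ => (((1 + γ ξ ^ 2) ^ (s / 2) : ℝ) : ℂ) * f ξ with hg_def
  set φ : X → ℂ := fun ξ => (((w ξ) ^ (s / 2) : ℝ) : ℂ) with hφ_def
  have hA_meas : Measurable fun ξ => 1 + γ ξ ^ 2 :=
    measurable_const.add (hγ_meas.pow_const 2)
  have hw_meas : Measurable w := measurable_const.div hA_meas
  have hφ_meas : Measurable φ :=
    Complex.measurable_ofReal.comp
      (((Real.continuous_rpow_const (by positivity : (0:ℝ) ≤ s / 2)).measurable).comp hw_meas)
  have hw_nonneg : ∀ ξ, (0:ℝ) ≤ w ξ := fun ξ => by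
    simp only [hw_def]; positivity
  have hφ_norm : ∀ ξ, ‖φ ξ‖ = ‖w ξ‖ ^ (s / 2) := by
    intro ξ
    simp only [hφ_def, Complex.norm_real, Real.norm_eq_abs]
    rw [abs_of_nonneg (Real.rpow_nonneg (hw_nonneg ξ) _), abs_of_nonneg (hw_nonneg ξ)]
  -- exponents
  set Q : ENNReal := ENNReal.ofReal (2 * α / s) with hQ_def
  have hQ_pos : (0:ℝ) < 2 * α / s := by positivity
  have hQmul : Q * ENNReal.ofReal (s / 2) = ENNReal.ofReal α := by
    rw [hQ_def, ← ENNReal.ofReal_mul hQ_pos.le]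
    congr 1
    field_simp
  have hpqr : 1 / ENNReal.ofReal p = 1 / Q + 1 / (2:ENNReal) := by
    have h2 : (2:ENNReal) = ENNReal.ofReal 2 := by norm_num
    rw [hQ_def, h2, one_div, one_div, one_div, ← ENNReal.ofReal_inv_of_pos hp_pos,
      ← ENNReal.ofReal_inv_of_pos hQ_pos, ← ENNReal.ofReal_inv_of_pos (by norm_num),
      ← ENNReal.ofReal_add (by positivity) (by norm_num)]
    congr 1
    rw [hp]
    field_simp
    ring
  -- φ ∈ L^Q
  have hwrpow : MemLp (fun ξ => ‖w ξ‖ ^ (s / 2)) Q μ := by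
    constructor
    · exact (((Real.continuous_rpow_const (by positivity : (0:ℝ) ≤ s / 2)).measurable).comp
        hw_meas.norm).aestronglyMeasurable
    · rw [eLpNorm_norm_rpow w (by positivity : (0:ℝ) < s / 2), hQmul]
      exact ENNReal.rpow_lt_top_of_nonneg (by positivity) hw.2.ne
  have hcong : eLpNorm φ Q μ = eLpNorm (fun ξ => ‖w ξ‖ ^ (s / 2)) Q μ :=
    eLpNorm_congr_norm_ae (ae_of_all μ fun ξ => by
      rw [Real.norm_of_nonneg (Real.rpow_nonneg (norm_nonneg _) _)]
      exact hφ_norm ξ)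
  have hφ_mem : MemLp φ Q μ :=
    ⟨hφ_meas.aestronglyMeasurable, by rw [hcong]; exact hwrpow.2⟩
  -- f = φ • g
  have hfeq : φ • g = f := by
    funext ξ
    have h1 : (0:ℝ) < 1 + γ ξ ^ 2 := hA ξ
    have h2 : (w ξ) ^ (s / 2) * ((1 + γ ξ ^ 2 : ℝ)) ^ (s / 2) = 1 := by
      rw [← Real.mul_rpow (hw_nonneg ξ) h1.le]
      have : w ξ * (1 + γ ξ ^ 2) = 1 := by
        simp only [hw_def]; field_simp
      rw [this, Real.one_rpow]
    simp only [Pi.smul_apply, Pi.mul_apply, hφ_def, hg_def, smul_eq_mul, ← mul_assoc,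
      ← Complex.ofReal_mul, h2, Complex.ofReal_one, one_mul]
  have hfp : MemLp f (ENNReal.ofReal p) μ := hfeq ▸ MemLp.smul hf hφ_mem (hpqr := ⟨by simpa only [one_div] using hpqr.symm⟩)
  have hholder : eLpNorm f (ENNReal.ofReal p) μ ≤ eLpNorm φ Q μ * eLpNorm g 2 μ := by
    rw [← hfeq]
    exact eLpNorm_smul_le_mul_eLpNorm hf.1 hφ_meas.aestronglyMeasurable
      (hpqr := ⟨by simpa only [one_div] using hpqr.symm⟩)
  refine ⟨hp1, hp2, hfp, ?_⟩
  -- convert eLpNorms to integrals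
  have hP_ne : ENNReal.ofReal p ≠ 0 := by
    simp [ENNReal.ofReal_eq_zero, not_le, hp_pos]
  have E1 : eLpNorm f (ENNReal.ofReal p) μ
      = ENNReal.ofReal ((∫ ξ, ‖f ξ‖ ^ p ∂μ) ^ (1 / p)) := by
    rw [hfp.eLpNorm_eq_integral_rpow_norm hP_ne ENNReal.ofReal_ne_top,
      ENNReal.toReal_ofReal hp_pos.le, one_div]
  have E2 : eLpNorm g 2 μ
      = ENNReal.ofReal ((∫ ξ, (1 + γ ξ ^ 2) ^ s * ‖f ξ‖ ^ 2 ∂μ) ^ (1/2 : ℝ)) := by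
    rw [hf.eLpNorm_eq_integral_rpow_norm two_ne_zero ENNReal.ofNat_ne_top]
    have h2r : (2:ENNReal).toReal = (2:ℝ) := by norm_num
    rw [h2r, show (2:ℝ)⁻¹ = (1/2:ℝ) by norm_num]
    congr 2
    apply integral_congr_ae
    filter_upwards with ξ
    have h1 : (0:ℝ) < 1 + γ ξ ^ 2 := hA ξ
    have hgnorm : ‖g ξ‖ = (1 + γ ξ ^ 2) ^ (s / 2) * ‖f ξ‖ := by
      simp only [hg_def, norm_mul, Complex.norm_real, Real.norm_eq_abs,
        abs_of_nonneg (Real.rpow_nonneg h1.le (s / 2))]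
    rw [hgnorm, Real.rpow_two, mul_pow, ← Real.rpow_natCast ((1 + γ ξ ^ 2) ^ (s / 2)) 2,
      ← Real.rpow_mul h1.le, show s / 2 * ((2:ℕ):ℝ) = s by push_cast; ring]
  have hIw_nonneg : (0:ℝ) ≤ ∫ ξ, (1 / (1 + γ ξ ^ 2)) ^ α ∂μ :=
    integral_nonneg fun ξ => Real.rpow_nonneg (hw_nonneg ξ) α
  have E3 : eLpNorm φ Q μ
      = ENNReal.ofReal (((∫ ξ, (1 / (1 + γ ξ ^ 2)) ^ α ∂μ) ^ (1 / α)) ^ (s / 2)) := by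
    rw [hcong,
      eLpNorm_norm_rpow w (by positivity : (0:ℝ) < s / 2), hQmul,
      hw.eLpNorm_eq_integral_rpow_norm (by simp [ENNReal.ofReal_eq_zero, not_le, hα0])
        ENNReal.ofReal_ne_top,
      ENNReal.toReal_ofReal hα0.le,
      ← ENNReal.ofReal_rpow_of_nonneg (by positivity) (by positivity : (0:ℝ) ≤ s / 2)]
    congr 2
    rw [one_div]
    congr 1
    apply integral_congr_ae
    filter_upwards with ξ
    rw [Real.norm_eq_abs, abs_of_nonneg (hw_nonneg ξ)]
  rw [E1, E2, E3] at hholder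
  rw [← ENNReal.ofReal_mul (by positivity)] at hholder
  have := (ENNReal.ofReal_le_ofReal_iff (by positivity)).mp hholder
  linarith [this]
end

section
/- Let $(X,\mu)$ be a measure space, $\gamma : X \to \mathbb{R}$ measurable with $\gamma(x) > 0$ for all $x$, $c > 0$ a real constant, $E$ a complex Hilbert space, and $\mathcal{F} : E \to L^2(X,\mu;\mathbb{C})$ a linear isometric equivalence. Define the weight $w_c(\xi) = 1 + \gamma(\xi)^2 e^{c\gamma(\xi)^2}$, the domain $D(\mathscr{L}_c) = \{T \in E : \xi \mapsto w_c(\xi)\,\mathcal{F}T(\xi) \in L^2(X,\mu)\}$, and for $T \in D(\mathscr{L}_c)$ set $\mathscr{L}_c T = -\,\mathcal{F}^{-1}\big(w_c\,\mathcal{F}T\big)$. Then for every $S \in E$ there exists a unique $T_0 \in D(\mathscr{L}_c)$ with $\mathscr{L}_c T_0 = S$, and this solution satisfies $\big\|w_c\,\mathcal{F}T_0\big\|_{L^2(\mu)} = \|S\|_E$. -/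
open MeasureTheory

/-- The quantum generalized bosonic string equation `𝓛_c T = S`,
where `𝓛_c T = -𝓕⁻¹(w_c 𝓕T)` with weight `w_c(ξ) = 1 + γ(ξ)² e^{cγ(ξ)²}` and
domain `D(𝓛_c) = {T : w_c 𝓕T ∈ L²}`, has, for every `S ∈ E`, a unique solution
`T₀ ∈ D(𝓛_c)` (expressed here by `w_c 𝓕T₀ = -𝓕S` a.e.), and every solution
satisfies `‖w_c 𝓕T₀‖_{L²} = ‖S‖_E`. -/
theorem quantum_bosonic_string_equation_unique_solution
    {X : Type*} [MeasurableSpace X] (μ : Measure X)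
    (γ : X → ℝ) (hγ_meas : Measurable γ) (hγ_pos : ∀ x, 0 < γ x)
    (c : ℝ) (hc : 0 < c)
    {E : Type*} [NormedAddCommGroup E] [InnerProductSpace ℂ E] [CompleteSpace E]
    (F : E ≃ₗᵢ[ℂ] Lp ℂ 2 μ)
    (S : E) :
    (∃! T₀ : E,
      MemLp (fun ξ => ((1 + γ ξ ^ 2 * Real.exp (c * γ ξ ^ 2) : ℝ) : ℂ) *
        (F T₀ : Lp ℂ 2 μ) ξ) 2 μ ∧
      (fun ξ => -(((1 + γ ξ ^ 2 * Real.exp (c * γ ξ ^ 2) : ℝ) : ℂ) *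
        (F T₀ : Lp ℂ 2 μ) ξ)) =ᵐ[μ] (F S : Lp ℂ 2 μ)) ∧
    (∀ T₀ : E,
      MemLp (fun ξ => ((1 + γ ξ ^ 2 * Real.exp (c * γ ξ ^ 2) : ℝ) : ℂ) *
        (F T₀ : Lp ℂ 2 μ) ξ) 2 μ →
      (fun ξ => -(((1 + γ ξ ^ 2 * Real.exp (c * γ ξ ^ 2) : ℝ) : ℂ) *
        (F T₀ : Lp ℂ 2 μ) ξ)) =ᵐ[μ] (F S : Lp ℂ 2 μ) →
      (∫ ξ, ‖((1 + γ ξ ^ 2 * Real.exp (c * γ ξ ^ 2) : ℝ) : ℂ) *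
        (F T₀ : Lp ℂ 2 μ) ξ‖ ^ 2 ∂μ) ^ (1/2 : ℝ) = ‖S‖) := by
  set w : X → ℝ := fun ξ => 1 + γ ξ ^ 2 * Real.exp (c * γ ξ ^ 2) with hw
  have hw1 : ∀ ξ, (1 : ℝ) ≤ w ξ := fun ξ => by
    have := sq_nonneg (γ ξ)
    have := (Real.exp_pos (c * γ ξ ^ 2)).le
    simp only [hw]; nlinarith
  have hwpos : ∀ ξ, (0 : ℝ) < w ξ := fun ξ => lt_of_lt_of_le one_pos (hw1 ξ)
  have hwne : ∀ ξ, ((w ξ : ℂ)) ≠ 0 := fun ξ => by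
    exact_mod_cast Complex.ofReal_ne_zero.2 (ne_of_gt (hwpos ξ))
  -- candidate solution
  set g : X → ℂ := fun ξ => -((w ξ : ℂ))⁻¹ * (F S : Lp ℂ 2 μ) ξ with hg
  have hgm : MemLp g 2 μ := by
    refine MemLp.of_le (Lp.memLp (F S)) ?_ ?_
    · refine AEStronglyMeasurable.mul ?_ (Lp.aestronglyMeasurable (F S))
      refine (Measurable.neg ?_).aestronglyMeasurable
      exact (Complex.measurable_ofReal.comp (by measurability)).inv
    · refine Filter.Eventually.of_forall fun ξ => ?_
      have h1 : ‖(-((w ξ : ℂ))⁻¹)‖ ≤ 1 := by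
        rw [norm_neg, norm_inv, Complex.norm_real, Real.norm_of_nonneg (hwpos ξ).le]
        exact inv_le_one_of_one_le₀ (hw1 ξ)
      calc ‖g ξ‖ = ‖(-((w ξ : ℂ))⁻¹)‖ * ‖(F S : Lp ℂ 2 μ) ξ‖ := norm_mul _ _
        _ ≤ 1 * ‖(F S : Lp ℂ 2 μ) ξ‖ := by
            exact mul_le_mul_of_nonneg_right h1 (norm_nonneg _)
        _ = ‖(F S : Lp ℂ 2 μ) ξ‖ := one_mul _
  set T₀ : E := F.symm (hgm.toLp g) with hT₀
  have hFT₀ : (F T₀ : Lp ℂ 2 μ) = hgm.toLp g := by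
    simp [hT₀]
  have hFT₀ae : (F T₀ : Lp ℂ 2 μ) =ᵐ[μ] g := hFT₀ ▸ hgm.coeFn_toLp
  have hkey : (fun ξ => ((w ξ : ℝ) : ℂ) * (F T₀ : Lp ℂ 2 μ) ξ)
      =ᵐ[μ] fun ξ => -((F S : Lp ℂ 2 μ) ξ) := by
    filter_upwards [hFT₀ae] with ξ hξ
    rw [hξ]
    simp only [hg]; rw [← mul_assoc, mul_neg, mul_inv_cancel₀ (hwne ξ)]
    ring
  constructor
  · refine ⟨T₀, ⟨?_, ?_⟩, ?_⟩
    · exact ((Lp.memLp (F S)).neg).ae_eq hkey.symm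
    · filter_upwards [hkey] with ξ hξ
      rw [hξ]; ring
    · -- uniqueness
      rintro T ⟨_, hT2⟩
      have hT0eq : (fun ξ => -(((w ξ : ℝ) : ℂ) * (F T₀ : Lp ℂ 2 μ) ξ))
          =ᵐ[μ] (F S : Lp ℂ 2 μ) := by
        filter_upwards [hkey] with ξ hξ
        rw [hξ]; ring
      have heq : (F T : Lp ℂ 2 μ) =ᵐ[μ] (F T₀ : Lp ℂ 2 μ) := by
        filter_upwards [hT2, hT0eq] with ξ h1 h2
        have : ((w ξ : ℝ) : ℂ) * (F T : Lp ℂ 2 μ) ξ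
            = ((w ξ : ℝ) : ℂ) * (F T₀ : Lp ℂ 2 μ) ξ := by
          have := h1.trans h2.symm
          linear_combination -this
        exact mul_left_cancel₀ (hwne ξ) this
      have : (F T : Lp ℂ 2 μ) = (F T₀ : Lp ℂ 2 μ) := Lp.ext heq
      exact F.injective this
  · -- norm identity
    intro T hTm hT2
    have hnorm_ae : (fun ξ => ‖((w ξ : ℝ) : ℂ) * (F T : Lp ℂ 2 μ) ξ‖ ^ 2)
        =ᵐ[μ] fun ξ => ‖(F S : Lp ℂ 2 μ) ξ‖ ^ 2 := by
      filter_upwards [hT2] with ξ hξ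
      rw [← norm_neg, hξ]
    have hint : (∫ ξ, ‖((w ξ : ℝ) : ℂ) * (F T : Lp ℂ 2 μ) ξ‖ ^ 2 ∂μ)
        = ∫ ξ, ‖(F S : Lp ℂ 2 μ) ξ‖ ^ 2 ∂μ := integral_congr_ae hnorm_ae
    have hS : ‖S‖ = (∫ ξ, ‖(F S : Lp ℂ 2 μ) ξ‖ ^ 2 ∂μ) ^ (1/2 : ℝ) := by
      have h1 : ‖S‖ = ‖F S‖ := (F.norm_map S).symm
      rw [h1, Lp.norm_def,
        MemLp.eLpNorm_eq_integral_rpow_norm (by norm_num) (by norm_num)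
          (Lp.memLp (F S))]
      rw [ENNReal.toReal_ofReal (by positivity)]
      norm_num
    rw [hint, hS]
end
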